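/- Let ℓ > 0 and Σ = {a,b,c}. For L₁ = (a+c)^ℓ and L₂ = (b+c)^ℓ: dsc(L₁) = dsc(L₂) = ℓ + 2, and dsc(L₁ ∪ L₂) = 3ℓ. -/

import Mathlib

/-- Deterministic state complexity: the minimal number of states of a complete DFA
accepting `L`. -/
noncomputable def dsc {α : Type} (L : Set (List α)) : ℕ :=
  sInf {n | ∃ M : DFA α (Fin n), M.accepts = L}

lemma dsc_le' {α : Type} {L : Set (List α)} {n : ℕ} (M : DFA α (Fin n))
    (h : M.accepts = L) : dsc L ≤ n := Nat.sInf_le ⟨M, h⟩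

lemma le_dsc' {α : Type} {L : Set (List α)} {ι : Type} [Fintype ι]
    (hne : ∃ n, ∃ M : DFA α (Fin n), M.accepts = L)
    (h : ∀ (n : ℕ) (M : DFA α (Fin n)), M.accepts = L →
        ∃ g : ι → Fin n, Function.Injective g) :
    Fintype.card ι ≤ dsc L := by
  obtain ⟨n₀, hn₀⟩ := hne
  apply le_csInf ⟨n₀, hn₀⟩
  rintro n ⟨M, hM⟩
  obtain ⟨g, hg⟩ := h n M hM
  simpa using Fintype.card_le_of_injective g hg

/-- residual behaviour of a state -/
def res {α σ : Type} (M : DFA α σ) (q : σ) (z : List α) : Prop :=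
  M.evalFrom q z ∈ M.accept

lemma res_eval {α σ : Type} (M : DFA α σ) (w z : List α) :
    res M (M.eval w) z ↔ (w ++ z) ∈ M.accepts := by
  rw [DFA.mem_accepts, DFA.eval, DFA.evalFrom_of_append]; rfl

/-- counting DFA for words of length ℓ with all letters satisfying G -/
def cnt (ℓ : ℕ) (G : Fin 3 → Prop) [DecidablePred G] : DFA (Fin 3) (Fin (ℓ + 2)) where
  step s a := if h : s.val < ℓ ∧ G a then ⟨s.val + 1, by omega⟩ else ⟨ℓ + 1, by omega⟩
  start := ⟨0, by omega⟩
  accept := {⟨ℓ, by omega⟩}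

lemma cnt_eval (ℓ : ℕ) (G : Fin 3 → Prop) [DecidablePred G] (w : List (Fin 3)) :
    ((cnt ℓ G).eval w).val =
      if w.length ≤ ℓ ∧ ∀ s ∈ w, G s then w.length else ℓ + 1 := by
  have step_val : ∀ (s : Fin (ℓ + 2)) (a : Fin 3),
      ((cnt ℓ G).step s a).val = if s.val < ℓ ∧ G a then s.val + 1 else ℓ + 1 := by
    intro s a
    by_cases h : s.val < ℓ ∧ G a <;> simp [cnt, h]
  induction w using List.reverseRecOn with
  | nil =>
    show (⟨0, by omega⟩ : Fin (ℓ + 2)).val = _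
    simp
  | append_singleton w a ih =>
    rw [DFA.eval, DFA.evalFrom_append_singleton, step_val]
    rw [show (cnt ℓ G).evalFrom (cnt ℓ G).start w = (cnt ℓ G).eval w from rfl, ih]
    simp only [List.forall_mem_append, List.forall_mem_singleton, List.length_append,
      List.length_singleton]
    split_ifs <;> (try simp_all) <;> omega

lemma cnt_accepts (ℓ : ℕ) (G : Fin 3 → Prop) [DecidablePred G] :
    (cnt ℓ G).accepts = {w : List (Fin 3) | w.length = ℓ ∧ ∀ s ∈ w, G s} := by
  ext w
  rw [DFA.mem_accepts]
  have h := cnt_eval ℓ G w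
  constructor
  · intro hw
    have : ((cnt ℓ G).eval w).val = ℓ := by
      have : (cnt ℓ G).eval w = ⟨ℓ, by omega⟩ := hw
      simp [this]
    rw [h] at this
    split_ifs at this with h1
    · exact ⟨this, h1.2⟩
    · omega
  · rintro ⟨h1, h2⟩
    have : ((cnt ℓ G).eval w).val = ℓ := by
      rw [h, if_pos ⟨le_of_eq h1, h2⟩, h1]
    show (cnt ℓ G).eval w = _
    exact Fin.ext this

lemma dsc_LG (ℓ : ℕ) (G : Fin 3 → Prop) [DecidablePred G] (hG2 : G 2)
    (bad : Fin 3) (hbad : ¬ G bad) :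
    dsc {w : List (Fin 3) | w.length = ℓ ∧ ∀ s ∈ w, G s} = ℓ + 2 := by
  classical
  set L : Set (List (Fin 3)) := {w : List (Fin 3) | w.length = ℓ ∧ ∀ s ∈ w, G s} with hL
  apply le_antisymm
  · exact dsc_le' (cnt ℓ G) (cnt_accepts ℓ G)
  · have hne : ∃ n, ∃ M : DFA (Fin 3) (Fin n), M.accepts = L :=
      ⟨ℓ + 2, cnt ℓ G, cnt_accepts ℓ G⟩
    have main : ∀ (n : ℕ) (M : DFA (Fin 3) (Fin n)), M.accepts = L →
        ∃ g : Fin (ℓ + 2) → Fin n, Function.Injective g := by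
      intro n M hM
      have key : ∀ w z : List (Fin 3), res M (M.eval w) z ↔
          ((w ++ z).length = ℓ ∧ ∀ s ∈ w ++ z, G s) := by
        intro w z
        rw [res_eval, hM]
        exact Iff.rfl
      have hres : ∀ k m : ℕ, res M (M.eval (List.replicate k (2 : Fin 3)))
          (List.replicate m (2 : Fin 3)) ↔ k + m = ℓ := by
        intro k m
        rw [key]
        simp only [List.length_append, List.length_replicate]
        constructor
        · exact fun h => h.1
        · intro h
          refine ⟨h, ?_⟩
          intro s hs
          rcases List.mem_append.mp hs with hs | hs <;>
            rw [List.eq_of_mem_replicate hs] <;> exact hG2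
      refine ⟨fun i => M.eval (if i.val ≤ ℓ then List.replicate i.val (2 : Fin 3) else [bad]),
        Function.LeftInverse.injective
          (g := fun q => if hP : ∃ m, res M q (List.replicate m (2 : Fin 3)) then
            (⟨ℓ - Nat.find hP, by omega⟩ : Fin (ℓ + 2)) else ⟨ℓ + 1, by omega⟩) ?_⟩
      intro i
      by_cases hi : i.val ≤ ℓ
      · simp only [if_pos hi]
        have hP : ∃ m, res M (M.eval (List.replicate i.val (2 : Fin 3)))
            (List.replicate m (2 : Fin 3)) := ⟨ℓ - i.val, (hres _ _).mpr (by omega)⟩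
        rw [dif_pos hP]
        have hfind : Nat.find hP = ℓ - i.val := by
          rw [Nat.find_eq_iff]
          exact ⟨(hres _ _).mpr (by omega), fun k hk => by rw [hres]; omega⟩
        apply Fin.ext
        simp only [hfind]
        omega
      · simp only [if_neg hi]
        have hP : ¬ ∃ m, res M (M.eval [bad]) (List.replicate m (2 : Fin 3)) := by
          rintro ⟨m, hm⟩
          rw [key] at hm
          exact hbad (hm.2 bad (by simp))
        rw [dif_neg hP]
        apply Fin.ext
        simp only []
        omega
    have := le_dsc' hne main
    simpa using this

def tr {α σ τ : Type} (M : DFA α σ) (e : τ ≃ σ) : DFA α τ where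
  step t a := e.symm (M.step (e t) a)
  start := e.symm M.start
  accept := e ⁻¹' M.accept

lemma tr_evalFrom {α σ τ : Type} (M : DFA α σ) (e : τ ≃ σ) (t : τ) (w : List α) :
    (tr M e).evalFrom t w = e.symm (M.evalFrom (e t) w) := by
  induction w generalizing t with
  | nil => simp [DFA.evalFrom]
  | cons a w ih =>
    show (tr M e).evalFrom ((tr M e).step t a) w = _
    rw [ih]
    simp [tr, Equiv.apply_symm_apply]

lemma tr_accepts {α σ τ : Type} (M : DFA α σ) (e : τ ≃ σ) :
    (tr M e).accepts = M.accepts := by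
  ext w
  rw [DFA.mem_accepts, DFA.mem_accepts, DFA.eval, DFA.eval, tr_evalFrom]
  show e.symm _ ∈ e ⁻¹' M.accept ↔ _
  simp [tr, Equiv.apply_symm_apply]

variable (ℓ : ℕ) (hℓ : 0 < ℓ)

/-- DFA for the union language, on `Fin 3 × Fin ℓ`. -/
def uD : DFA (Fin 3) (Fin 3 × Fin ℓ) where
  step := fun p a =>
    if hi : p.2.val + 1 < ℓ then
      if p.1 = 0 then
        (if a = 2 then (0, ⟨p.2.val + 1, hi⟩) else if a = 0 then (1, ⟨p.2.val + 1, hi⟩)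
          else (2, ⟨p.2.val + 1, hi⟩))
      else if p.2.val = 0 then (1, ⟨0, hℓ⟩)
      else if p.1 = 1 then
        (if a = 0 ∨ a = 2 then (1, ⟨p.2.val + 1, hi⟩) else (1, ⟨0, hℓ⟩))
      else
        (if a = 1 ∨ a = 2 then (2, ⟨p.2.val + 1, hi⟩) else (1, ⟨0, hℓ⟩))
    else
      if p.1 = 0 then (2, ⟨0, hℓ⟩)
      else if p.2.val = 0 then (1, ⟨0, hℓ⟩)
      else if p.1 = 1 then (if a = 0 ∨ a = 2 then (2, ⟨0, hℓ⟩) else (1, ⟨0, hℓ⟩))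
      else (if a = 1 ∨ a = 2 then (2, ⟨0, hℓ⟩) else (1, ⟨0, hℓ⟩))
  start := (0, ⟨0, hℓ⟩)
  accept := {(2, ⟨0, hℓ⟩)}

/-- expected state after reading `w` -/
def uf (w : List (Fin 3)) : Fin 3 × Fin ℓ :=
  if h : w.length < ℓ then
    if ∀ s ∈ w, s = (2 : Fin 3) then (0, ⟨w.length, h⟩)
    else if ∀ s ∈ w, s = (0 : Fin 3) ∨ s = 2 then (1, ⟨w.length, h⟩)
    else if ∀ s ∈ w, s = (1 : Fin 3) ∨ s = 2 then (2, ⟨w.length, h⟩)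
    else (1, ⟨0, hℓ⟩)
  else if w.length = ℓ ∧ ((∀ s ∈ w, s = (0 : Fin 3) ∨ s = 2) ∨ (∀ s ∈ w, s = (1 : Fin 3) ∨ s = 2))
    then (2, ⟨0, hℓ⟩)
  else (1, ⟨0, hℓ⟩)

lemma u_step_dead (a : Fin 3) :
    (uD ℓ hℓ).step (1, ⟨0, hℓ⟩) a = (1, ⟨0, hℓ⟩) := by
  simp [uD]

lemma u_step_acc (a : Fin 3) :
    (uD ℓ hℓ).step (2, ⟨0, hℓ⟩) a = (1, ⟨0, hℓ⟩) := by
  simp [uD]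

lemma u_step0_lt (i : Fin ℓ) (hi : i.val + 1 < ℓ) (a : Fin 3) :
    (uD ℓ hℓ).step (0, i) a =
      (if a = 2 then (0, ⟨i.val + 1, hi⟩) else if a = 0 then (1, ⟨i.val + 1, hi⟩)
        else (2, ⟨i.val + 1, hi⟩)) := by
  simp [uD, hi]

lemma u_step0_eq (i : Fin ℓ) (hi : ¬ (i.val + 1 < ℓ)) (a : Fin 3) :
    (uD ℓ hℓ).step (0, i) a = (2, ⟨0, hℓ⟩) := by
  simp [uD, hi]

lemma u_step1_lt (i : Fin ℓ) (hi0 : i.val ≠ 0) (hi : i.val + 1 < ℓ) (a : Fin 3) :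
    (uD ℓ hℓ).step (1, i) a =
      (if a = 0 ∨ a = 2 then (1, ⟨i.val + 1, hi⟩) else (1, ⟨0, hℓ⟩)) := by
  simp [uD, hi, hi0]

lemma u_step1_eq (i : Fin ℓ) (hi0 : i.val ≠ 0) (hi : ¬ (i.val + 1 < ℓ)) (a : Fin 3) :
    (uD ℓ hℓ).step (1, i) a =
      (if a = 0 ∨ a = 2 then (2, ⟨0, hℓ⟩) else (1, ⟨0, hℓ⟩)) := by
  simp [uD, hi, hi0]

lemma u_step2_lt (i : Fin ℓ) (hi0 : i.val ≠ 0) (hi : i.val + 1 < ℓ) (a : Fin 3) :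
    (uD ℓ hℓ).step (2, i) a =
      (if a = 1 ∨ a = 2 then (2, ⟨i.val + 1, hi⟩) else (1, ⟨0, hℓ⟩)) := by
  simp [uD, hi, hi0]

lemma u_step2_eq (i : Fin ℓ) (hi0 : i.val ≠ 0) (hi : ¬ (i.val + 1 < ℓ)) (a : Fin 3) :
    (uD ℓ hℓ).step (2, i) a =
      (if a = 1 ∨ a = 2 then (2, ⟨0, hℓ⟩) else (1, ⟨0, hℓ⟩)) := by
  simp [uD, hi, hi0]
set_option maxHeartbeats 1600000 in
lemma u_eval (w : List (Fin 3)) : (uD ℓ hℓ).eval w = uf ℓ hℓ w := by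
  induction w using List.reverseRecOn with
  | nil =>
    rw [show (uD ℓ hℓ).eval [] = ((0 : Fin 3), (⟨0, hℓ⟩ : Fin ℓ)) from rfl]
    rw [uf, dif_pos (by simpa using hℓ), if_pos (by simp)]
    rfl
  | append_singleton w a ih =>
    rw [DFA.eval, DFA.evalFrom_append_singleton]
    rw [show (uD ℓ hℓ).evalFrom (uD ℓ hℓ).start w = (uD ℓ hℓ).eval w from rfl, ih]
    clear ih
    have hne : ¬(∀ s ∈ w, s = (2 : Fin 3)) → 0 < w.length := by
      intro h
      rcases Nat.eq_zero_or_pos w.length with h0 | h0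
      · exact absurd (by intro s hs; simp [List.length_eq_zero_iff.mp h0] at hs) h
      · exact h0
    have hca : ∀ hc : ∀ s ∈ w, s = (2 : Fin 3), ∀ s ∈ w, s = (0 : Fin 3) ∨ s = 2 :=
      fun hc s hs => Or.inr (hc s hs)
    have hcb : ∀ hc : ∀ s ∈ w, s = (2 : Fin 3), ∀ s ∈ w, s = (1 : Fin 3) ∨ s = 2 :=
      fun hc s hs => Or.inr (hc s hs)
    rcases lt_or_ge w.length ℓ with hlt | hge
    · by_cases hc : ∀ s ∈ w, s = (2 : Fin 3)
      · have eC := eq_true hc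
        have eA := eq_true (hca hc)
        have eB := eq_true (hcb hc)
        rw [show uf ℓ hℓ w = (0, ⟨w.length, hlt⟩) from by rw [uf, dif_pos hlt, if_pos hc]]
        by_cases hi : w.length + 1 < ℓ
        · rw [u_step0_lt ℓ hℓ _ hi]
          fin_cases a <;> rw [uf] <;>
            simp only [List.length_append, List.length_singleton, List.forall_mem_append,
              List.forall_mem_singleton, eC, eA, eB] <;>
          split_ifs <;>
            simp_all (config := { contextual := true }) [Prod.ext_iff, Fin.ext_iff] <;> first | omega | aesop
        · rw [u_step0_eq ℓ hℓ _ hi]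
          fin_cases a <;> rw [uf] <;>
            simp only [List.length_append, List.length_singleton, List.forall_mem_append,
              List.forall_mem_singleton, eC, eA, eB] <;>
          split_ifs <;>
            simp_all (config := { contextual := true }) [Prod.ext_iff, Fin.ext_iff] <;> first | omega | aesop
      · have h0 : w.length ≠ 0 := fun h0 => hc (by intro s hs; simp [List.length_eq_zero_iff.mp h0] at hs)
        by_cases hac : ∀ s ∈ w, s = (0 : Fin 3) ∨ s = 2
        · have hbc : ¬ ∀ s ∈ w, s = (1 : Fin 3) ∨ s = 2 := by
            intro hbc
            apply hc
            intro s hs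
            rcases hac s hs with h | h
            · rcases hbc s hs with h' | h' <;> simp_all
            · exact h
          have eC := eq_false hc
          have eA := eq_true hac
          have eB := eq_false hbc
          rw [show uf ℓ hℓ w = (1, ⟨w.length, hlt⟩) from by
            rw [uf, dif_pos hlt, if_neg hc, if_pos hac]]
          by_cases hi : w.length + 1 < ℓ
          · rw [u_step1_lt ℓ hℓ _ h0 hi]
            fin_cases a <;> rw [uf] <;>
            simp only [List.length_append, List.length_singleton, List.forall_mem_append,
              List.forall_mem_singleton, eC, eA, eB] <;>
          split_ifs <;>
            (clear eC eA eB hca hcb hne hc hac hbc; simp_all (config := { contextual := true }) [Prod.ext_iff, Fin.ext_iff]) <;> first | omega | aesop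
          · rw [u_step1_eq ℓ hℓ _ h0 hi]
            fin_cases a <;> rw [uf] <;>
            simp only [List.length_append, List.length_singleton, List.forall_mem_append,
              List.forall_mem_singleton, eC, eA, eB] <;>
          split_ifs <;>
            (clear eC eA eB hca hcb hne hc hac hbc; simp_all (config := { contextual := true }) [Prod.ext_iff, Fin.ext_iff]) <;> first | omega | aesop
        · by_cases hbc : ∀ s ∈ w, s = (1 : Fin 3) ∨ s = 2
          · have eC := eq_false hc
            have eA := eq_false hac
            have eB := eq_true hbc
            rw [show uf ℓ hℓ w = (2, ⟨w.length, hlt⟩) from by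
              rw [uf, dif_pos hlt, if_neg hc, if_neg hac, if_pos hbc]]
            by_cases hi : w.length + 1 < ℓ
            · rw [u_step2_lt ℓ hℓ _ h0 hi]
              fin_cases a <;> rw [uf] <;>
            simp only [List.length_append, List.length_singleton, List.forall_mem_append,
              List.forall_mem_singleton, eC, eA, eB] <;>
          split_ifs <;>
            (clear eC eA eB hca hcb hne hc hac hbc; simp_all (config := { contextual := true }) [Prod.ext_iff, Fin.ext_iff]) <;> first | omega | aesop
            · rw [u_step2_eq ℓ hℓ _ h0 hi]
              fin_cases a <;> rw [uf] <;>
            simp only [List.length_append, List.length_singleton, List.forall_mem_append,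
              List.forall_mem_singleton, eC, eA, eB] <;>
          split_ifs <;>
            (clear eC eA eB hca hcb hne hc hac hbc; simp_all (config := { contextual := true }) [Prod.ext_iff, Fin.ext_iff]) <;> first | omega | aesop
          · have eC := eq_false hc
            have eA := eq_false hac
            have eB := eq_false hbc
            rw [show uf ℓ hℓ w = (1, ⟨0, hℓ⟩) from by
              rw [uf, dif_pos hlt, if_neg hc, if_neg hac, if_neg hbc]]
            rw [u_step_dead, uf]
            simp only [List.length_append, List.length_singleton, List.forall_mem_append,
              List.forall_mem_singleton, eC, eA, eB]
            split_ifs <;>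
              first | rfl | (exfalso; tauto)
    · -- w.length ≥ ℓ
      by_cases hLw : w.length = ℓ ∧ ((∀ s ∈ w, s = (0 : Fin 3) ∨ s = 2) ∨ (∀ s ∈ w, s = (1 : Fin 3) ∨ s = 2))
      · rw [show uf ℓ hℓ w = (2, ⟨0, hℓ⟩) from by
          rw [uf, dif_neg (by omega), if_pos hLw]]
        rw [u_step_acc, uf,
          dif_neg (by simp only [List.length_append, List.length_singleton]; omega),
          if_neg (by rintro ⟨h1, -⟩; simp only [List.length_append, List.length_singleton] at h1; omega)]
      · rw [show uf ℓ hℓ w = (1, ⟨0, hℓ⟩) from by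
          rw [uf, dif_neg (by omega), if_neg hLw]]
        rw [u_step_dead, uf,
          dif_neg (by simp only [List.length_append, List.length_singleton]; omega),
          if_neg (by rintro ⟨h1, -⟩; simp only [List.length_append, List.length_singleton] at h1; omega)]

lemma u_accepts :
    (uD ℓ hℓ).accepts = {w : List (Fin 3) | w.length = ℓ ∧ ∀ s ∈ w, s = 0 ∨ s = 2} ∪
      {w : List (Fin 3) | w.length = ℓ ∧ ∀ s ∈ w, s = 1 ∨ s = 2} := by
  ext w
  rw [DFA.mem_accepts, u_eval]
  rw [show (uD ℓ hℓ).accept = {((2 : Fin 3), (⟨0, hℓ⟩ : Fin ℓ))} from rfl]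
  rw [Set.mem_singleton_iff, uf]
  split_ifs with h1 h2 h3 h4 h5
  · refine iff_of_false (by simp [Prod.ext_iff]) ?_
    rintro (⟨h, -⟩ | ⟨h, -⟩) <;> omega
  · refine iff_of_false (by simp [Prod.ext_iff]) ?_
    rintro (⟨h, -⟩ | ⟨h, -⟩) <;> omega
  · have h0 : w.length ≠ 0 := fun hh => h2 (by intro s hs; simp [List.length_eq_zero_iff.mp hh] at hs)
    refine iff_of_false ?_ ?_
    · simp only [Prod.ext_iff, Fin.ext_iff]
      rintro ⟨-, hh⟩
      exact h0 hh
    · rintro (⟨h, -⟩ | ⟨h, -⟩) <;> omega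
  · refine iff_of_false (by simp [Prod.ext_iff]) ?_
    rintro (⟨h, -⟩ | ⟨h, -⟩) <;> omega
  · refine iff_of_true rfl ?_
    rcases h5 with ⟨hl, hA | hB⟩
    · exact Or.inl ⟨hl, hA⟩
    · exact Or.inr ⟨hl, hB⟩
  · refine iff_of_false (by simp [Prod.ext_iff]) ?_
    rintro (⟨h, hh⟩ | ⟨h, hh⟩) <;> exact h5 ⟨h, by tauto⟩

theorem stmt15 (ℓ : ℕ) (hℓ : 0 < ℓ) :
    dsc {w : List (Fin 3) | w.length = ℓ ∧ ∀ s ∈ w, s = 0 ∨ s = 2} = ℓ + 2 ∧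
    dsc {w : List (Fin 3) | w.length = ℓ ∧ ∀ s ∈ w, s = 1 ∨ s = 2} = ℓ + 2 ∧
    dsc ({w : List (Fin 3) | w.length = ℓ ∧ ∀ s ∈ w, s = 0 ∨ s = 2} ∪
         {w : List (Fin 3) | w.length = ℓ ∧ ∀ s ∈ w, s = 1 ∨ s = 2}) = 3 * ℓ := by
  classical
  refine ⟨dsc_LG ℓ (fun s => s = 0 ∨ s = 2) (Or.inr rfl) 1 (by decide),
    dsc_LG ℓ (fun s => s = 1 ∨ s = 2) (Or.inr rfl) 0 (by decide), ?_⟩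
  have hupper : ∃ M : DFA (Fin 3) (Fin (3 * ℓ)),
      M.accepts = {w : List (Fin 3) | w.length = ℓ ∧ ∀ s ∈ w, s = 0 ∨ s = 2} ∪
        {w : List (Fin 3) | w.length = ℓ ∧ ∀ s ∈ w, s = 1 ∨ s = 2} :=
    ⟨tr (uD ℓ hℓ) finProdFinEquiv.symm, by rw [tr_accepts, u_accepts]⟩
  apply le_antisymm
  · obtain ⟨M, hM⟩ := hupper
    exact dsc_le' M hM
  · have main : ∀ (n : ℕ) (M : DFA (Fin 3) (Fin n)),
        M.accepts = {w : List (Fin 3) | w.length = ℓ ∧ ∀ s ∈ w, s = 0 ∨ s = 2} ∪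
          {w : List (Fin 3) | w.length = ℓ ∧ ∀ s ∈ w, s = 1 ∨ s = 2} →
        ∃ g : Fin 3 × Fin ℓ → Fin n, Function.Injective g := by
      intro n M hM
      have key : ∀ w z : List (Fin 3), res M (M.eval w) z ↔
          ((w ++ z).length = ℓ ∧ ((∀ s ∈ w ++ z, s = (0 : Fin 3) ∨ s = 2) ∨
            (∀ s ∈ w ++ z, s = (1 : Fin 3) ∨ s = 2))) := by
        intro w z
        rw [res_eval, hM]
        constructor
        · rintro (⟨h1, h2⟩ | ⟨h1, h2⟩)
          exacts [⟨h1, Or.inl h2⟩, ⟨h1, Or.inr h2⟩]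
        · rintro ⟨h1, h2 | h2⟩
          exacts [Or.inl ⟨h1, h2⟩, Or.inr ⟨h1, h2⟩]
      have memP : ∀ (P : Fin 3 → Prop) (l1 l2 : List (Fin 3)), (∀ s ∈ l1, P s) →
          (∀ s ∈ l2, P s) → ∀ s ∈ l1 ++ l2, P s :=
        fun P l1 l2 h1 h2 s hs => (List.mem_append.mp hs).elim (h1 s) (h2 s)
      have memR : ∀ (P : Fin 3 → Prop) (k : ℕ) (a : Fin 3), P a →
          ∀ s ∈ List.replicate k a, P s :=
        fun P k a ha s hs => (List.eq_of_mem_replicate hs) ▸ ha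
      have memC : ∀ (P : Fin 3 → Prop) (a : Fin 3) (l : List (Fin 3)), P a →
          (∀ s ∈ l, P s) → ∀ s ∈ a :: l, P s :=
        fun P a l ha hl s hs => (List.mem_cons.mp hs).elim (fun h => h ▸ ha) (hl s)
      have noAB : ∀ u : List (Fin 3), (0 : Fin 3) ∈ u → (1 : Fin 3) ∈ u →
          ¬((∀ s ∈ u, s = (0 : Fin 3) ∨ s = 2) ∨ (∀ s ∈ u, s = (1 : Fin 3) ∨ s = 2)) := by
        rintro u h0 h1 (h | h)
        · rcases h 1 h1 with h' | h' <;> exact absurd h' (by decide)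
        · rcases h 0 h0 with h' | h' <;> exact absurd h' (by decide)
      have resC : ∀ k m : ℕ, res M (M.eval (List.replicate k (2 : Fin 3)))
          (List.replicate m (2 : Fin 3)) ↔ k + m = ℓ := by
        intro k m
        rw [key]
        constructor
        · intro h
          have := h.1
          simpa using this
        · intro h
          refine ⟨by simpa using h, Or.inl (memP _ _ _ (memR _ _ _ (by decide))
            (memR _ _ _ (by decide)))⟩
      have resA : ∀ i m : ℕ, i ≠ 0 → i ≤ ℓ →
          (res M (M.eval ((0 : Fin 3) :: List.replicate (i - 1) 2))
            (List.replicate m (2 : Fin 3)) ↔ i + m = ℓ) := by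
        intro i m hi0 hil
        rw [key]
        constructor
        · intro h
          have := h.1
          simp at this
          omega
        · intro h
          refine ⟨by simp; omega, Or.inl (memP _ _ _ (memC _ _ _ (by decide)
            (memR _ _ _ (by decide))) (memR _ _ _ (by decide)))⟩
      have resB : ∀ i m : ℕ, i ≠ 0 → i ≤ ℓ →
          (res M (M.eval ((1 : Fin 3) :: List.replicate (i - 1) 2))
            (List.replicate m (2 : Fin 3)) ↔ i + m = ℓ) := by
        intro i m hi0 hil
        rw [key]
        constructor
        · intro h
          have := h.1
          simp at this
          omega
        · intro h
          refine ⟨by simp; omega, Or.inr (memP _ _ _ (memC _ _ _ (by decide)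
            (memR _ _ _ (by decide))) (memR _ _ _ (by decide)))⟩
      set cls : Fin n → Fin 3 × Fin ℓ := fun q =>
          if hP : ∃ m, res M q (List.replicate m (2 : Fin 3)) then
            (if Nat.find hP = 0 then ((2 : Fin 3), (⟨0, hℓ⟩ : Fin ℓ))
             else if res M q ((0 : Fin 3) :: List.replicate (Nat.find hP - 1) 2) then
               (if res M q ((1 : Fin 3) :: List.replicate (Nat.find hP - 1) 2) then
                 ((0 : Fin 3), ⟨(ℓ - Nat.find hP) % ℓ, Nat.mod_lt _ hℓ⟩)
                else ((1 : Fin 3), ⟨(ℓ - Nat.find hP) % ℓ, Nat.mod_lt _ hℓ⟩))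
             else ((2 : Fin 3), ⟨(ℓ - Nat.find hP) % ℓ, Nat.mod_lt _ hℓ⟩))
          else ((1 : Fin 3), ⟨0, hℓ⟩) with hcls
      refine ⟨fun p => M.eval (if p.1 = 0 then List.replicate p.2.val 2
          else if p.2.val = 0 then (if p.1 = 1 then [0, 1] else List.replicate ℓ 2)
          else if p.1 = 1 then (0 : Fin 3) :: List.replicate (p.2.val - 1) 2
          else (1 : Fin 3) :: List.replicate (p.2.val - 1) 2),
        Function.LeftInverse.injective (g := cls) ?_⟩
      rintro ⟨v, i⟩
      have hiℓ := i.isLt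
      dsimp only
      by_cases hv0 : v = 0
      · rw [if_pos hv0, hcls]; dsimp only
        have hP : ∃ m, res M (M.eval (List.replicate i.val 2))
            (List.replicate m (2 : Fin 3)) := ⟨ℓ - i.val, (resC _ _).mpr (by omega)⟩
        rw [dif_pos hP]
        have hf : Nat.find hP = ℓ - i.val := by
          rw [Nat.find_eq_iff]
          exact ⟨(resC _ _).mpr (by omega), fun k hk => by rw [resC]; omega⟩
        rw [hf, if_neg (by omega : ¬(ℓ - i.val = 0))]
        have t0 : res M (M.eval (List.replicate i.val 2))
            ((0 : Fin 3) :: List.replicate (ℓ - i.val - 1) 2) := by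
          rw [key]
          refine ⟨by simp; omega, Or.inl (memP _ _ _ (memR _ _ _ (by decide))
            (memC _ _ _ (by decide) (memR _ _ _ (by decide))))⟩
        have t1 : res M (M.eval (List.replicate i.val 2))
            ((1 : Fin 3) :: List.replicate (ℓ - i.val - 1) 2) := by
          rw [key]
          refine ⟨by simp; omega, Or.inr (memP _ _ _ (memR _ _ _ (by decide))
            (memC _ _ _ (by decide) (memR _ _ _ (by decide))))⟩
        rw [if_pos t0, if_pos t1]
        refine Prod.ext hv0.symm (Fin.ext ?_)
        show (ℓ - (ℓ - i.val)) % ℓ = i.val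
        rw [Nat.mod_eq_of_lt (by omega)]
        omega
      · by_cases hv1 : v = 1
        · rw [if_neg hv0]
          by_cases hi0 : i.val = 0
          · rw [if_pos hi0, if_pos hv1, hcls]; dsimp only
            have hP : ¬ ∃ m, res M (M.eval [0, 1]) (List.replicate m (2 : Fin 3)) := by
              rintro ⟨m, hm⟩
              rw [key] at hm
              exact noAB _ (by simp) (by simp) hm.2
            rw [dif_neg hP]
            exact Prod.ext hv1.symm (Fin.ext (by simp [hi0]))
          · rw [if_neg hi0, if_pos hv1, hcls]; dsimp only
            have hP : ∃ m, res M (M.eval ((0 : Fin 3) :: List.replicate (i.val - 1) 2))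
                (List.replicate m (2 : Fin 3)) :=
              ⟨ℓ - i.val, (resA _ _ hi0 (by omega)).mpr (by omega)⟩
            rw [dif_pos hP]
            have hf : Nat.find hP = ℓ - i.val := by
              rw [Nat.find_eq_iff]
              exact ⟨(resA _ _ hi0 (by omega)).mpr (by omega),
                fun k hk => by rw [resA _ _ hi0 (by omega)]; omega⟩
            rw [hf, if_neg (by omega : ¬(ℓ - i.val = 0))]
            have t0 : res M (M.eval ((0 : Fin 3) :: List.replicate (i.val - 1) 2))
                ((0 : Fin 3) :: List.replicate (ℓ - i.val - 1) 2) := by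
              rw [key]
              refine ⟨by simp; omega, Or.inl (memP _ _ _
                (memC _ _ _ (by decide) (memR _ _ _ (by decide)))
                (memC _ _ _ (by decide) (memR _ _ _ (by decide))))⟩
            have t1 : ¬ res M (M.eval ((0 : Fin 3) :: List.replicate (i.val - 1) 2))
                ((1 : Fin 3) :: List.replicate (ℓ - i.val - 1) 2) := by
              intro h
              rw [key] at h
              exact noAB _ (by simp) (by simp) h.2
            rw [if_pos t0, if_neg t1]
            refine Prod.ext hv1.symm (Fin.ext ?_)
            show (ℓ - (ℓ - i.val)) % ℓ = i.val
            rw [Nat.mod_eq_of_lt (by omega)]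
            omega
        · have hv2 : v = 2 := by
            have := v.isLt
            apply Fin.ext
            simp only [Fin.ext_iff] at hv0 hv1
            show v.val = 2
            omega
          rw [if_neg hv0]
          by_cases hi0 : i.val = 0
          · rw [if_pos hi0, if_neg (by rw [hv2]; decide), hcls]; dsimp only
            have hP : ∃ m, res M (M.eval (List.replicate ℓ (2 : Fin 3)))
                (List.replicate m (2 : Fin 3)) := ⟨0, (resC _ _).mpr (by omega)⟩
            rw [dif_pos hP]
            have hf : Nat.find hP = 0 := by
              rw [Nat.find_eq_iff]
              exact ⟨(resC _ _).mpr (by omega), fun k hk => by omega⟩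
            rw [hf, if_pos rfl]
            exact Prod.ext hv2.symm (Fin.ext (by simp [hi0]))
          · rw [if_neg hi0, if_neg (by rw [hv2]; decide), hcls]; dsimp only
            have hP : ∃ m, res M (M.eval ((1 : Fin 3) :: List.replicate (i.val - 1) 2))
                (List.replicate m (2 : Fin 3)) :=
              ⟨ℓ - i.val, (resB _ _ hi0 (by omega)).mpr (by omega)⟩
            rw [dif_pos hP]
            have hf : Nat.find hP = ℓ - i.val := by
              rw [Nat.find_eq_iff]
              exact ⟨(resB _ _ hi0 (by omega)).mpr (by omega),
                fun k hk => by rw [resB _ _ hi0 (by omega)]; omega⟩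
            rw [hf, if_neg (by omega : ¬(ℓ - i.val = 0))]
            have t0 : ¬ res M (M.eval ((1 : Fin 3) :: List.replicate (i.val - 1) 2))
                ((0 : Fin 3) :: List.replicate (ℓ - i.val - 1) 2) := by
              intro h
              rw [key] at h
              exact noAB _ (by simp) (by simp) h.2
            rw [if_neg t0]
            refine Prod.ext hv2.symm (Fin.ext ?_)
            show (ℓ - (ℓ - i.val)) % ℓ = i.val
            rw [Nat.mod_eq_of_lt (by omega)]
            omega
    obtain ⟨n₀, hn₀⟩ := hupper
    have := le_dsc' ⟨3 * ℓ, n₀, hn₀⟩ main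
    simpa using this
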